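/- Fix m₁, m₂ ≥ 1 and a permutation π of Fin m₁ × Fin m₂. There exists a valid plan for π in the two-dimensional pick-n-swap model that uses exactly π.support.card + π.cycleType.card pick-n-swap operations (the minimum possible) and whose total end-effector travel is at most Σ_{q} dist(π⁻¹ q, q) + (π.cycleType.card + 1) · √(m₁² + m₂²). -/

import Mathlib

/-- One pick-n-swap operation at cell `ℓ`: the state `(a, h)` becomes
`(Function.update a ℓ h, a ℓ)`. -/
def pnsStep {γ β : Type*} [DecidableEq γ]
    (st : (γ → Option β) × Option β) (ℓ : γ) : (γ → Option β) × Option β :=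
  (Function.update st.1 ℓ st.2, st.1 ℓ)

/-- Execute a plan (a list of cells) from a starting state. -/
def pnsExec {γ β : Type*} [DecidableEq γ]
    (start : (γ → Option β) × Option β) (plan : List γ) : (γ → Option β) × Option β :=
  plan.foldl pnsStep start

/-- A plan is valid for the permutation `π` (π p is the label of the item initially
at cell p) if executing it transforms the initial state into the sorted goal state. -/
def ValidPlan {α : Type*} [DecidableEq α] (π : Equiv.Perm α) (plan : List α) : Prop :=
  pnsExec (fun i => some (π i), none) plan = (fun i => some i, none)

/-- Euclidean distance between two cells of an `m₁ × m₂` lattice. -/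
noncomputable def dist2D {m₁ m₂ : ℕ} (p q : Fin m₁ × Fin m₂) : ℝ :=
  Real.sqrt ((((p.1 : ℕ) : ℝ) - ((q.1 : ℕ) : ℝ)) ^ 2 +
    (((p.2 : ℕ) : ℝ) - ((q.2 : ℕ) : ℝ)) ^ 2)

/-- Total end-effector travel of a 2D plan `p₁, …, p_N`: the sum of
`dist(p_j, p_{j+1})` for `j = 0, …, N`, where `p₀ = p_{N+1} = (0,0)` is the rest
position (the top-left cell). -/
noncomputable def travel2D {m₁ m₂ : ℕ} (h₁ : 0 < m₁) (h₂ : 0 < m₂)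
    (plan : List (Fin m₁ × Fin m₂)) : ℝ :=
  ((((⟨0, h₁⟩, ⟨0, h₂⟩) :: plan).zip (plan ++ [((⟨0, h₁⟩, ⟨0, h₂⟩) : Fin m₁ × Fin m₂)])).map
    (fun pq => dist2D pq.1 pq.2)).sum

open Equiv Equiv.Perm Finset
open scoped Classical

section Exec
variable {α : Type*} [DecidableEq α]

lemma pnsExec_append (st : (α → Option α) × Option α) (l₁ l₂ : List α) :
    pnsExec st (l₁ ++ l₂) = pnsExec (pnsExec st l₁) l₂ :=
  List.foldl_append

omit [DecidableEq α] in
lemma range_map_shift (g : ℕ → α) (k : ℕ) :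
    (List.range (k + 1)).map g = g 0 :: (List.range k).map (fun j => g (j + 1)) := by
  rw [List.range_succ_eq_map]
  simp [List.map_map, Function.comp]

lemma exec_orbit : ∀ (k : ℕ) (g : ℕ → α) (a : α → Option α),
    (∀ i j, 1 ≤ i → i ≤ k + 1 → 1 ≤ j → j ≤ k + 1 → g i = g j → i = j) →
    (∀ j, 1 ≤ j → j ≤ k → a (g j) = some (g (j + 1))) →
    a (g (k + 1)) = none →
    pnsExec (a, some (g 1)) ((List.range (k + 1)).map (fun j => g (j + 1))) =
      (fun y => if ∃ j, 1 ≤ j ∧ j ≤ k + 1 ∧ g j = y then some y else a y, none)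
  | 0, g, a, hinj, hchain, hlast => by
    have h0 : (List.range 1).map (fun j => g (j + 1)) = [g 1] := rfl
    rw [h0]
    show (Function.update a (g 1) (some (g 1)), a (g 1)) = _
    rw [hlast]
    refine Prod.ext (funext fun y => ?_) rfl
    dsimp only
    by_cases hy : y = g 1
    · subst hy
      rw [if_pos ⟨1, le_refl _, le_refl _, rfl⟩, Function.update_self]
    · rw [Function.update_of_ne hy, if_neg]
      rintro ⟨j, h1, h2, rfl⟩
      have : j = 1 := by omega
      subst this
      exact hy rfl
  | (k+1), g, a, hinj, hchain, hlast => by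
    have hlist : (List.range (k + 2)).map (fun j => g (j + 1)) =
        g 1 :: (List.range (k + 1)).map (fun j => g (j + 1 + 1)) := by
      rw [range_map_shift (fun j => g (j + 1)) (k + 1)]
    rw [hlist]
    have hstep : pnsExec (a, some (g 1))
        (g 1 :: (List.range (k + 1)).map (fun j => g (j + 1 + 1))) =
        pnsExec (Function.update a (g 1) (some (g 1)), a (g 1))
          ((List.range (k + 1)).map (fun j => g (j + 1 + 1))) := rfl
    rw [hstep, hchain 1 (le_refl _) (by omega)]
    have hne1 : ∀ j, 1 ≤ j → j ≤ k + 1 → g (j + 1) ≠ g 1 := by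
      intro j hj1 hj2 h
      have := hinj (j + 1) 1 (by omega) (by omega) (by omega) (by omega) h
      omega
    have IH := exec_orbit k (fun j => g (j + 1)) (Function.update a (g 1) (some (g 1)))
      (fun i j hi1 hi2 hj1 hj2 h => by
        have := hinj (i + 1) (j + 1) (by omega) (by omega) (by omega) (by omega) h
        omega)
      (fun j hj1 hj2 => by
        rw [Function.update_of_ne (hne1 j hj1 (by omega))]
        exact hchain (j + 1) (by omega) (by omega))
      (by rw [Function.update_of_ne (hne1 (k + 1) (by omega) (by omega))]; exact hlast)
    rw [IH]
    refine Prod.ext (funext fun y => ?_) rfl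
    dsimp only
    by_cases hy : y = g 1
    · subst hy
      rw [if_neg (fun hC => by
        obtain ⟨j, hj1, hj2, hj⟩ := hC
        exact hne1 j hj1 hj2 hj), Function.update_self,
        if_pos ⟨1, by omega, by omega, rfl⟩]
    · by_cases hC : ∃ j, 1 ≤ j ∧ j ≤ k + 1 ∧ g (j + 1) = y
      · rw [if_pos hC]
        obtain ⟨j, hj1, hj2, hj⟩ := hC
        rw [if_pos ⟨j + 1, by omega, by omega, hj⟩]
      · rw [if_neg hC, Function.update_of_ne hy, if_neg]
        rintro ⟨j, hj1, hj2, rfl⟩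
        rcases Nat.lt_or_ge j 2 with h2 | h2
        · have : j = 1 := by omega
          subst this
          exact hy rfl
        · exact hC ⟨j - 1, by omega, by omega, by congr 1; omega⟩
end Exec

section Cycle
variable {α : Type*} [DecidableEq α] [Fintype α]

lemma orbit_mem_support {c : Equiv.Perm α} {x : α} (hx : x ∈ c.support) :
    ∀ j, (c ^ j) x ∈ c.support := by
  intro j
  induction j with
  | zero => simpa using hx
  | succ n ih => rw [pow_succ', Equiv.Perm.mul_apply]; exact Equiv.Perm.apply_mem_support.mpr ih

lemma orbit_inj {c : Equiv.Perm α} (hc : c.IsCycle) {x : α} (hx : x ∈ c.support) :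
    ∀ i < c.support.card, ∀ j < c.support.card, (c ^ i) x = (c ^ j) x → i = j := by
  have key : ∀ i j, i ≤ j → j < c.support.card → (c ^ i) x = (c ^ j) x → i = j := by
    intro i j hij hj h
    have h2 : (c ^ (j - i)) ((c ^ i) x) = (c ^ i) x := by
      rw [← Equiv.Perm.mul_apply, ← pow_add]
      rw [Nat.sub_add_cancel hij]
      exact h.symm
    have hmem : (c ^ i) x ∈ c.support := orbit_mem_support hx i
    have h1 : c ^ (j - i) = 1 :=
      (hc.pow_eq_one_iff' (Equiv.Perm.mem_support.mp hmem)).mpr h2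
    have := orderOf_dvd_of_pow_eq_one h1
    rw [hc.orderOf] at this
    have := Nat.eq_zero_of_dvd_of_lt this (by omega)
    · omega
  intro i hi j hj h
  rcases le_or_gt i j with hle | hlt
  · exact key i j hle hj h
  · exact (key j i (le_of_lt hlt) hi h.symm).symm

lemma orbit_surj {c : Equiv.Perm α} (hc : c.IsCycle) {x : α} (hx : x ∈ c.support) :
    ∀ y ∈ c.support, ∃ j < c.support.card, (c ^ j) x = y := by
  intro y hy
  obtain ⟨i, hi⟩ := hc.exists_pow_eq (Equiv.Perm.mem_support.mp hx) (Equiv.Perm.mem_support.mp hy)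
  have hkpos : 0 < c.support.card := Finset.card_pos.mpr ⟨x, hx⟩
  refine ⟨i % c.support.card, Nat.mod_lt _ hkpos, ?_⟩
  rw [← hc.orderOf, pow_mod_orderOf, hi]

lemma cycle_pow_card {c : Equiv.Perm α} (hc : c.IsCycle) : c ^ c.support.card = 1 := by
  rw [← hc.orderOf]; exact pow_orderOf_eq_one c

lemma cycle_step (c : Equiv.Perm α) (hc : c.IsCycle) (x : α) (hx : x ∈ c.support)
    (ρ : Equiv.Perm α) (hρ : ∀ y ∈ c.support, ρ y = c y) :
    pnsExec (fun i => some (ρ i), none)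
        ((List.range (c.support.card + 1)).map (fun j => (c ^ j) x)) =
      (fun i => some ((ρ * c⁻¹) i), none) := by
  set g : ℕ → α := fun j => (c ^ j) x with hg
  have hgmem : ∀ j, g j ∈ c.support := orbit_mem_support hx
  have hinj : ∀ i < c.support.card, ∀ j < c.support.card, g i = g j → i = j := orbit_inj hc hx
  have hsurj : ∀ y ∈ c.support, ∃ j < c.support.card, g j = y := orbit_surj hc hx
  have hgk : g c.support.card = x := by
    show (c ^ c.support.card) x = x
    simp [cycle_pow_card hc]
  have hkpos : 0 < c.support.card := Finset.card_pos.mpr ⟨x, hx⟩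
  have hco : orderOf c = c.support.card := hc.orderOf
  have hmod : ∀ i, g (i % c.support.card) = g i := by
    intro i
    show (c ^ (i % c.support.card)) x = (c ^ i) x
    rw [← hco, pow_mod_orderOf]
  have hg0 : g 0 = x := by show (c ^ 0) x = x; simp
  have hgsucc : ∀ j, g (j + 1) = c (g j) := by
    intro j
    show (c ^ (j + 1)) x = c ((c ^ j) x)
    rw [pow_succ', Equiv.Perm.mul_apply]
  have hinj' : ∀ i j, 1 ≤ i → i ≤ c.support.card → 1 ≤ j → j ≤ c.support.card →
      g i = g j → i = j := by
    intro i j hi1 hi2 hj1 hj2 h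
    have hi : i % c.support.card = i ∨ (i = c.support.card ∧ i % c.support.card = 0) := by
      rcases Nat.lt_or_ge i c.support.card with h' | h'
      · exact Or.inl (Nat.mod_eq_of_lt h')
      · have hik : i = c.support.card := by omega
        exact Or.inr ⟨hik, by simp [hik]⟩
    have hj : j % c.support.card = j ∨ (j = c.support.card ∧ j % c.support.card = 0) := by
      rcases Nat.lt_or_ge j c.support.card with h' | h'
      · exact Or.inl (Nat.mod_eq_of_lt h')
      · have hjk : j = c.support.card := by omega
        exact Or.inr ⟨hjk, by simp [hjk]⟩
    have := hinj (i % c.support.card) (Nat.mod_lt _ hkpos) (j % c.support.card)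
      (Nat.mod_lt _ hkpos) (by rw [hmod, hmod]; exact h)
    omega
  obtain ⟨k', hk⟩ : ∃ k', c.support.card = k' + 1 := ⟨c.support.card - 1, by omega⟩
  rw [hk, range_map_shift]
  show pnsExec (Function.update (fun i => some (ρ i)) (g 0) none, some (ρ (g 0)))
      ((List.range (k' + 1)).map (fun j => g (j + 1))) = _
  have hρ0 : ρ (g 0) = g 1 := by rw [hρ _ (hgmem 0), ← hgsucc]
  rw [hρ0]
  have hne0 : ∀ j, 1 ≤ j → j ≤ k' → g j ≠ g 0 := by
    intro j h1 h2 h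
    have := hinj j (by omega) 0 (by omega) h
    omega
  have IH := exec_orbit (k') g (Function.update (fun i => some (ρ i)) (g 0) none)
    (fun i j hi1 hi2 hj1 hj2 h => hinj' i j hi1 (by omega) hj1 (by omega) h)
    (fun j hj1 hj2 => by
      rw [Function.update_of_ne (hne0 j hj1 hj2)]
      rw [hρ _ (hgmem j), ← hgsucc])
    (by rw [show g (k' + 1) = g 0 by rw [← hk, hgk, hg0], Function.update_self])
  rw [IH]
  refine Prod.ext (funext fun y => ?_) rfl
  dsimp only
  by_cases hC : ∃ j, 1 ≤ j ∧ j ≤ k' + 1 ∧ g j = y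
  · rw [if_pos hC]
    obtain ⟨j, hj1, hj2, rfl⟩ := hC
    have hmem : g j ∈ c.support := hgmem j
    have hinv : c⁻¹ (g j) ∈ c.support := by
      rw [← Equiv.Perm.support_inv c]
      rw [← Equiv.Perm.support_inv c] at hmem
      exact Equiv.Perm.apply_mem_support.mpr hmem
    rw [Equiv.Perm.mul_apply, hρ _ hinv, ← Equiv.Perm.mul_apply, mul_inv_cancel, Equiv.Perm.one_apply]
  · rw [if_neg hC]
    have hyx : y ≠ g 0 := by
      intro h
      exact hC ⟨k' + 1, by omega, by omega, by rw [← hk, hgk]; exact (h.trans hg0).symm⟩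
    rw [Function.update_of_ne hyx]
    have hysupp : y ∉ c.support := by
      intro hy
      obtain ⟨j, hj, hgj⟩ := hsurj y hy
      rcases Nat.eq_zero_or_pos j with h0 | hpos
      · exact hyx (by rw [← hgj, h0])
      · exact hC ⟨j, hpos, by omega, hgj⟩
    have hcy : c⁻¹ y = y := by
      rw [Equiv.Perm.inv_eq_iff_eq]
      exact (Equiv.Perm.notMem_support.mp hysupp).symm
    rw [Equiv.Perm.mul_apply, hcy]
end Cycle

section Geom
variable {m₁ m₂ : ℕ}

lemma dist2D_nonneg (p q : Fin m₁ × Fin m₂) : 0 ≤ dist2D p q := Real.sqrt_nonneg _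

lemma dist2D_self (p : Fin m₁ × Fin m₂) : dist2D p p = 0 := by
  simp [dist2D]

lemma dist2D_le (p q : Fin m₁ × Fin m₂) :
    dist2D p q ≤ Real.sqrt ((m₁ : ℝ) ^ 2 + (m₂ : ℝ) ^ 2) := by
  apply Real.sqrt_le_sqrt
  have h1 : ((p.1 : ℕ) : ℝ) < (m₁ : ℝ) := by exact_mod_cast p.1.isLt
  have h2 : ((q.1 : ℕ) : ℝ) < (m₁ : ℝ) := by exact_mod_cast q.1.isLt
  have h3 : ((p.2 : ℕ) : ℝ) < (m₂ : ℝ) := by exact_mod_cast p.2.isLt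
  have h4 : ((q.2 : ℕ) : ℝ) < (m₂ : ℝ) := by exact_mod_cast q.2.isLt
  have h5 : (0:ℝ) ≤ ((p.1 : ℕ) : ℝ) := Nat.cast_nonneg _
  have h6 : (0:ℝ) ≤ ((q.1 : ℕ) : ℝ) := Nat.cast_nonneg _
  have h7 : (0:ℝ) ≤ ((p.2 : ℕ) : ℝ) := Nat.cast_nonneg _
  have h8 : (0:ℝ) ≤ ((q.2 : ℕ) : ℝ) := Nat.cast_nonneg _
  nlinarith

noncomputable def plen2 : (Fin m₁ × Fin m₂) → List (Fin m₁ × Fin m₂) → ℝ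
  | _, [] => 0
  | x, y :: l => dist2D x y + plen2 y l

noncomputable def inner2 : List (Fin m₁ × Fin m₂) → ℝ
  | [] => 0
  | x :: l => plen2 x l

lemma plen2_nonneg : ∀ (x : Fin m₁ × Fin m₂) (l : List (Fin m₁ × Fin m₂)), 0 ≤ plen2 x l
  | _, [] => le_refl 0
  | x, y :: l => add_nonneg (dist2D_nonneg x y) (plen2_nonneg y l)

lemma plen2_append_cons : ∀ (l : List (Fin m₁ × Fin m₂)) (x y : Fin m₁ × Fin m₂)
    (m : List (Fin m₁ × Fin m₂)),
    plen2 x (l ++ y :: m) = plen2 x (l ++ [y]) + plen2 y m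
  | [], x, y, m => by simp [plen2]
  | a :: l, x, y, m => by
    simp only [List.cons_append, plen2, List.append_eq]
    rw [plen2_append_cons l a y m]
    ring

lemma plen2_concat_le : ∀ (l : List (Fin m₁ × Fin m₂)) (x y : Fin m₁ × Fin m₂),
    plen2 x (l ++ [y]) ≤ plen2 x l + Real.sqrt ((m₁ : ℝ) ^ 2 + (m₂ : ℝ) ^ 2)
  | [], x, y => by simpa [plen2] using dist2D_le x y
  | a :: l, x, y => by
    simp only [List.cons_append, plen2, List.append_eq]
    have := plen2_concat_le l a y
    linarith

lemma travel2D_eq (h₁ : 0 < m₁) (h₂ : 0 < m₂) (plan : List (Fin m₁ × Fin m₂)) :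
    travel2D h₁ h₂ plan =
      plen2 ((⟨0, h₁⟩, ⟨0, h₂⟩)) (plan ++ [((⟨0, h₁⟩, ⟨0, h₂⟩) : Fin m₁ × Fin m₂)]) := by
  have key : ∀ (l : List (Fin m₁ × Fin m₂)) (x w : Fin m₁ × Fin m₂),
      (((x :: l).zip (l ++ [w])).map (fun pq => dist2D pq.1 pq.2)).sum = plen2 x (l ++ [w]) := by
    intro l
    induction l with
    | nil => intro x w; simp [plen2]
    | cons a l ih =>
      intro x w
      simp only [List.cons_append, List.zip_cons_cons, List.map_cons, List.sum_cons, plen2, List.append_eq]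
      rw [ih a w]
  exact key plan _ _

lemma inner2_append_le (l₁ l₂ : List (Fin m₁ × Fin m₂)) (h₁' : l₁ ≠ []) (h₂' : l₂ ≠ []) :
    inner2 (l₁ ++ l₂) ≤ inner2 l₁ + Real.sqrt ((m₁ : ℝ) ^ 2 + (m₂ : ℝ) ^ 2) + inner2 l₂ := by
  obtain ⟨x, r₁, rfl⟩ : ∃ x r, l₁ = x :: r := by
    cases l₁ with
    | nil => exact absurd rfl h₁'
    | cons x r => exact ⟨x, r, rfl⟩
  obtain ⟨y, r₂, rfl⟩ : ∃ y r, l₂ = y :: r := by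
    cases l₂ with
    | nil => exact absurd rfl h₂'
    | cons y r => exact ⟨y, r, rfl⟩
  show plen2 x (r₁ ++ y :: r₂) ≤ plen2 x r₁ + _ + plen2 y r₂
  rw [plen2_append_cons]
  have := plen2_concat_le r₁ x y
  linarith

lemma plen2_orbit : ∀ (k : ℕ) (g : ℕ → Fin m₁ × Fin m₂),
    plen2 (g 0) ((List.range k).map (fun j => g (j + 1))) =
      ∑ j ∈ Finset.range k, dist2D (g j) (g (j + 1))
  | 0, g => by simp [plen2]
  | (k+1), g => by
    have hlist : (List.range (k + 1)).map (fun j => g (j + 1)) =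
        g 1 :: (List.range k).map (fun j => g (j + 1 + 1)) :=
      range_map_shift (fun j => g (j + 1)) k
    rw [hlist]
    show dist2D (g 0) (g 1) + plen2 (g 1) _ = _
    rw [plen2_orbit k (fun j => g (j + 1)), Finset.sum_range_succ']
    ring
end Geom

section Sums
variable {m₁ m₂ : ℕ}

lemma sum_orbit (c : Equiv.Perm (Fin m₁ × Fin m₂)) (hc : c.IsCycle)
    (x : Fin m₁ × Fin m₂) (hx : x ∈ c.support) :
    ∑ j ∈ Finset.range c.support.card,
        dist2D ((c ^ j) x) ((c ^ (j + 1)) x) =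
      ∑ q : Fin m₁ × Fin m₂, dist2D (c⁻¹ q) q := by
  set g : ℕ → Fin m₁ × Fin m₂ := fun j => (c ^ j) x with hg
  have hgmem : ∀ j, g j ∈ c.support := orbit_mem_support hx
  have hinj : ∀ i < c.support.card, ∀ j < c.support.card, g i = g j → i = j := orbit_inj hc hx
  have hsurj : ∀ y ∈ c.support, ∃ j < c.support.card, g j = y := orbit_surj hc hx
  have hgsucc : ∀ j, g (j + 1) = c (g j) := by
    intro j
    show (c ^ (j + 1)) x = c ((c ^ j) x)
    rw [pow_succ', Equiv.Perm.mul_apply]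
  have hginv : ∀ j, c⁻¹ (g (j + 1)) = g j := by
    intro j
    rw [hgsucc, ← Equiv.Perm.mul_apply, inv_mul_cancel, Equiv.Perm.one_apply]
  -- rewrite each term as F (g (j+1)) where F q = dist2D (c⁻¹ q) q
  have step1 : ∑ j ∈ Finset.range c.support.card, dist2D (g j) (g (j + 1)) =
      ∑ j ∈ Finset.range c.support.card, dist2D (c⁻¹ (g (j + 1))) (g (j + 1)) := by
    refine Finset.sum_congr rfl fun j _ => ?_
    rw [hginv]
  -- image of shifted map is the support
  have hinj2 : Set.InjOn (fun j => g (j + 1)) (Finset.range c.support.card) := by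
    intro i hi j hj h
    simp only [Finset.coe_range, Set.mem_Iio] at hi hj
    have : g (i + 1) = g (j + 1) := h
    rw [hgsucc, hgsucc] at this
    have h2 : g i = g j := c.injective this
    exact hinj i hi j hj h2
  have himg : Finset.image (fun j => g (j + 1)) (Finset.range c.support.card) = c.support := by
    apply Finset.eq_of_subset_of_card_le
    · intro y hy
      simp only [Finset.mem_image] at hy
      obtain ⟨j, _, rfl⟩ := hy
      exact hgmem (j + 1)
    · rw [Finset.card_image_of_injOn hinj2, Finset.card_range]
  have step2 : ∑ j ∈ Finset.range c.support.card, dist2D (c⁻¹ (g (j + 1))) (g (j + 1)) =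
      ∑ q ∈ c.support, dist2D (c⁻¹ q) q := by
    conv_rhs => rw [← himg]
    rw [Finset.sum_image (fun i hi j hj h => hinj2 hi hj h)]
  rw [step1, step2]
  apply Finset.sum_subset (Finset.subset_univ _)
  intro q _ hq
  have : c⁻¹ q = q := by
    rw [Equiv.Perm.inv_eq_iff_eq]
    exact (Equiv.Perm.notMem_support.mp hq).symm
  rw [this, dist2D_self]

lemma dist_sum_disjoint {σ τ : Equiv.Perm (Fin m₁ × Fin m₂)} (h : σ.Disjoint τ) :
    ∑ q : Fin m₁ × Fin m₂, dist2D ((σ * τ)⁻¹ q) q =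
      (∑ q : Fin m₁ × Fin m₂, dist2D (σ⁻¹ q) q) +
        ∑ q : Fin m₁ × Fin m₂, dist2D (τ⁻¹ q) q := by
  rw [← Finset.sum_add_distrib]
  refine Finset.sum_congr rfl fun q _ => ?_
  have hq : (σ * τ)⁻¹ q = τ⁻¹ (σ⁻¹ q) := by
    rw [mul_inv_rev, Equiv.Perm.mul_apply]
  rcases h q with h1 | h1
  · have hσ : σ⁻¹ q = q := by rw [Equiv.Perm.inv_eq_iff_eq, h1]
    rw [hq, hσ, dist2D_self, zero_add]
  · have hτq : τ⁻¹ q = q := by rw [Equiv.Perm.inv_eq_iff_eq, h1]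
    have hfix : τ⁻¹ (σ⁻¹ q) = σ⁻¹ q := by
      by_cases hs : σ q = q
      · have : σ⁻¹ q = q := by rw [Equiv.Perm.inv_eq_iff_eq, hs]
        rw [this, hτq]
      · have hmem : σ⁻¹ q ∈ σ.support := by
          rw [← Equiv.Perm.support_inv σ]
          apply Equiv.Perm.apply_mem_support.mpr
          rw [Equiv.Perm.support_inv σ]
          exact Equiv.Perm.mem_support.mpr hs
        rcases h (σ⁻¹ q) with h2 | h2
        · exact absurd h2 (Equiv.Perm.mem_support.mp hmem)
        · rw [Equiv.Perm.inv_eq_iff_eq, h2]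
    rw [hq, hfix, hτq, dist2D_self, add_zero]
end Sums


/-- There is a valid plan for `π` in the two-dimensional pick-n-swap model using
exactly the minimum number `π.support.card + π.cycleType.card` of pick-n-swap
operations whose total end-effector travel is at most
`Σ_q dist(π⁻¹ q, q) + (π.cycleType.card + 1) · √(m₁² + m₂²)`. -/

theorem exists_near_opt_plan_2D {m₁ m₂ : ℕ} (h₁ : 0 < m₁) (h₂ : 0 < m₂)
    (π : Equiv.Perm (Fin m₁ × Fin m₂)) :
    ∃ plan : List (Fin m₁ × Fin m₂), ValidPlan π plan ∧
      plan.length = π.support.card + Multiset.card π.cycleType ∧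
      travel2D h₁ h₂ plan ≤ (∑ q : Fin m₁ × Fin m₂, dist2D (π⁻¹ q) q) +
        ((Multiset.card π.cycleType : ℝ) + 1) *
          Real.sqrt ((m₁ : ℝ) ^ 2 + (m₂ : ℝ) ^ 2) := by
  classical
  set D := Real.sqrt ((m₁ : ℝ) ^ 2 + (m₂ : ℝ) ^ 2) with hD
  have hD0 : 0 ≤ D := Real.sqrt_nonneg _
  have main : ∀ τ : Equiv.Perm (Fin m₁ × Fin m₂), ∃ plan : List (Fin m₁ × Fin m₂),
      (∀ ρ : Equiv.Perm (Fin m₁ × Fin m₂), (∀ y ∈ τ.support, ρ y = τ y) →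
        pnsExec (fun i => some (ρ i), none) plan = (fun i => some ((ρ * τ⁻¹) i), none)) ∧
      plan.length = τ.support.card + Multiset.card τ.cycleType ∧
      (plan = [] ∨ (plan ≠ [] ∧ inner2 plan ≤ (∑ q : Fin m₁ × Fin m₂, dist2D (τ⁻¹ q) q) +
        ((Multiset.card τ.cycleType : ℝ) - 1) * D)) := by
    intro τ
    induction τ using Equiv.Perm.cycle_induction_on with
    | base_one =>
      refine ⟨[], ?_, ?_, Or.inl rfl⟩
      · intro ρ _
        show (fun i => some (ρ i), (none : Option (Fin m₁ × Fin m₂))) = _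
        refine Prod.ext (funext fun i => ?_) rfl
        simp
      · simp [Equiv.Perm.support_one, Equiv.Perm.cycleType_one]
    | base_cycles σ hσ =>
      obtain ⟨x, hx', -⟩ := id hσ
      have hx : x ∈ σ.support := Equiv.Perm.mem_support.mpr hx'
      have hc1 : Multiset.card σ.cycleType = 1 := by rw [hσ.cycleType]; rfl
      refine ⟨(List.range (σ.support.card + 1)).map (fun j => (σ ^ j) x),
        fun ρ hρ => cycle_step σ hσ x hx ρ hρ, ?_, Or.inr ⟨by simp, ?_⟩⟩
      · rw [List.length_map, List.length_range, hc1]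
      · have hinner : inner2 ((List.range (σ.support.card + 1)).map (fun j => (σ ^ j) x)) =
            ∑ q : Fin m₁ × Fin m₂, dist2D (σ⁻¹ q) q := by
          rw [range_map_shift (fun j => (σ ^ j) x) σ.support.card]
          show plen2 ((σ ^ 0) x) ((List.range σ.support.card).map (fun j => (σ ^ (j + 1)) x)) = _
          rw [plen2_orbit σ.support.card (fun j => (σ ^ j) x)]
          exact sum_orbit σ hσ x hx
        rw [hinner, hc1]
        simp
    | induction_disjoint σ τ hd hσ ihσ ihτ =>
      obtain ⟨l₁, hv₁, hl₁, hb₁⟩ := ihσ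
      obtain ⟨l₂, hv₂, hl₂, hb₂⟩ := ihτ
      have hc1 : Multiset.card σ.cycleType = 1 := by rw [hσ.cycleType]; rfl
      have hne₁ : l₁ ≠ [] := by
        intro h
        rw [h] at hl₁
        simp [hc1] at hl₁
      have hbnd₁ : inner2 l₁ ≤ (∑ q : Fin m₁ × Fin m₂, dist2D (σ⁻¹ q) q) +
          ((Multiset.card σ.cycleType : ℝ) - 1) * D := by
        rcases hb₁ with h | ⟨-, h⟩
        · exact absurd h hne₁
        · exact h
      refine ⟨l₁ ++ l₂, ?_, ?_, ?_⟩
      · intro ρ hρ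
        rw [pnsExec_append]
        have hρσ : ∀ y ∈ σ.support, ρ y = σ y := by
          intro y hy
          have hτy : τ y = y := by
            rcases hd y with h | h
            · exact absurd h (Equiv.Perm.mem_support.mp hy)
            · exact h
          rw [hρ y (by rw [hd.support_mul]; exact Finset.mem_union_left _ hy),
            Equiv.Perm.mul_apply, hτy]
        rw [hv₁ ρ hρσ]
        have hρ₂ : ∀ y ∈ τ.support, (ρ * σ⁻¹) y = τ y := by
          intro y hy
          have hσy : σ y = y := by
            rcases hd y with h | h
            · exact h
            · exact absurd h (Equiv.Perm.mem_support.mp hy)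
          have hσinv : σ⁻¹ y = y := by rw [Equiv.Perm.inv_eq_iff_eq, hσy]
          rw [Equiv.Perm.mul_apply, hσinv,
            hρ y (by rw [hd.support_mul]; exact Finset.mem_union_right _ hy),
            Equiv.Perm.mul_apply]
          have hmem : τ y ∈ τ.support := Equiv.Perm.apply_mem_support.mpr hy
          rcases hd (τ y) with h | h
          · exact h
          · exact absurd h (Equiv.Perm.mem_support.mp hmem)
        rw [hv₂ _ hρ₂]
        have hgrp : ρ * σ⁻¹ * τ⁻¹ = ρ * (σ * τ)⁻¹ := by
          have hcomm : σ⁻¹ * τ⁻¹ = τ⁻¹ * σ⁻¹ := by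
            have h' := congrArg (fun g => g⁻¹) hd.commute.eq
            simpa [mul_inv_rev] using h'.symm
          rw [mul_assoc, hcomm, ← mul_inv_rev]
        rw [hgrp]
      · rw [List.length_append, hl₁, hl₂, hd.card_support_mul, hd.cycleType_mul,
          Multiset.card_add]
        omega
      · refine Or.inr ⟨by simp [hne₁], ?_⟩
        rcases hb₂ with h2 | ⟨hne₂, hbnd₂⟩
        · -- l₂ = [], so τ = 1
          have hτ1 : τ = 1 := by
            rw [h2] at hl₂
            simp only [List.length_nil] at hl₂
            have : τ.support.card = 0 := by omega
            rw [Finset.card_eq_zero, Equiv.Perm.support_eq_empty_iff] at this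
            exact this
          subst hτ1
          rw [h2, List.append_nil, mul_one]
          exact hbnd₁
        · have hcat := inner2_append_le l₁ l₂ hne₁ hne₂
          rw [dist_sum_disjoint hd, hd.cycleType_mul, Multiset.card_add]
          simp only [hc1]
          push_cast
          have : (0:ℝ) ≤ D := hD0
          rw [hc1] at hbnd₁
          push_cast at hbnd₁
          linarith
  obtain ⟨plan, hv, hl, hb⟩ := main π
  refine ⟨plan, ?_, hl, ?_⟩
  · show pnsExec (fun i => some (π i), none) plan = (fun i => some i, none)
    have h := hv π (fun y _ => rfl)
    rw [h]
    refine Prod.ext (funext fun i => ?_) rfl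
    simp
  · rw [travel2D_eq]
    set z : Fin m₁ × Fin m₂ := (⟨0, h₁⟩, ⟨0, h₂⟩) with hz
    have hsum0 : 0 ≤ ∑ q : Fin m₁ × Fin m₂, dist2D (π⁻¹ q) q :=
      Finset.sum_nonneg fun q _ => dist2D_nonneg _ _
    have hcard0 : (0:ℝ) ≤ (Multiset.card π.cycleType : ℝ) + 1 := by positivity
    cases plan with
    | nil =>
      show plen2 z [z] ≤ _
      have : plen2 z [z] = 0 := by simp [plen2, dist2D_self]
      rw [this]
      exact add_nonneg hsum0 (mul_nonneg hcard0 hD0)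
    | cons x r =>
      have hbnd : inner2 (x :: r) ≤ (∑ q : Fin m₁ × Fin m₂, dist2D (π⁻¹ q) q) +
          ((Multiset.card π.cycleType : ℝ) - 1) * D := by
        rcases hb with h | ⟨-, h⟩
        · exact absurd h (by simp)
        · exact h
      show plen2 z ((x :: r) ++ [z]) ≤ _
      have e1 : plen2 z ((x :: r) ++ [z]) = dist2D z x + plen2 x (r ++ [z]) := rfl
      have e2 : plen2 x (r ++ [z]) ≤ plen2 x r + D := plen2_concat_le r x z
      have e3 : inner2 (x :: r) = plen2 x r := rfl
      have e4 : dist2D z x ≤ D := dist2D_le z x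
      rw [e1]
      rw [e3] at hbnd
      linarith
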